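/- Let a, b, c be three points on a circle of radius R in ℝ² such that the two arcs from a to c and from c to b each have length greater than d > 0. Then the inscribed angle satisfies ∠acb < π − d/R. -/

import Mathlib

open Real EuclideanGeometry

private lemma abs_toReal_add_le' (θ φ : Real.Angle) :
    |(θ + φ).toReal| ≤ |θ.toReal| + |φ.toReal| := by
  have h1 := θ.neg_pi_lt_toReal
  have h2 := θ.toReal_le_pi
  have h3 := φ.neg_pi_lt_toReal
  have h4 := φ.toReal_le_pi
  have hpi := Real.pi_pos
  have hs : θ + φ = ((θ.toReal + φ.toReal : ℝ) : Real.Angle) := by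
    rw [Real.Angle.coe_add, θ.coe_toReal, φ.coe_toReal]
  set s := θ.toReal + φ.toReal with hsdef
  rcases le_or_gt s (-π) with h | h
  · have ht : ((s : ℝ) : Real.Angle).toReal = s + 2 * π := by
      rw [Real.Angle.toReal_coe_eq_self_add_two_pi_iff, Set.mem_Ioc]
      constructor <;> nlinarith
    rw [hs, ht]
    have habsθ : -θ.toReal ≤ |θ.toReal| := neg_le_abs _
    have habsφ : -φ.toReal ≤ |φ.toReal| := neg_le_abs _
    have : |s + 2 * π| = s + 2 * π := abs_of_nonneg (by nlinarith)
    rw [this]; nlinarith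
  · rcases le_or_gt s π with h' | h'
    · have ht : ((s : ℝ) : Real.Angle).toReal = s := by
        rw [Real.Angle.toReal_coe_eq_self_iff]; exact ⟨by linarith, h'⟩
      rw [hs, ht]; exact abs_add_le _ _
    · have ht : ((s : ℝ) : Real.Angle).toReal = s - 2 * π := by
        rw [Real.Angle.toReal_coe_eq_self_sub_two_pi_iff, Set.mem_Ioc]
        constructor <;> nlinarith
      rw [hs, ht]
      have habsθ : θ.toReal ≤ |θ.toReal| := le_abs_self _
      have habsφ : φ.toReal ≤ |φ.toReal| := le_abs_self _
      have : |s - 2 * π| = 2 * π - s := by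
        rw [abs_of_nonpos (by nlinarith)]; ring
      rw [this]; nlinarith

private lemma angle_le_angle_add_angle' (p p₁ p₂ p₃ : EuclideanSpace ℝ (Fin 2))
    (h1 : p₁ ≠ p) (h2 : p₂ ≠ p) (h3 : p₃ ≠ p) :
    EuclideanGeometry.angle p₁ p p₃ ≤
      EuclideanGeometry.angle p₁ p p₂ + EuclideanGeometry.angle p₂ p p₃ := by
  haveI : Fact (Module.finrank ℝ (EuclideanSpace ℝ (Fin 2)) = 2) :=
    ⟨finrank_euclideanSpace_fin⟩
  haveI : Module.Oriented ℝ (EuclideanSpace ℝ (Fin 2)) (Fin 2) :=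
    ⟨(EuclideanSpace.basisFun (Fin 2) ℝ).toBasis.orientation⟩
  rw [EuclideanGeometry.angle_eq_abs_oangle_toReal h1 h3,
    EuclideanGeometry.angle_eq_abs_oangle_toReal h1 h2,
    EuclideanGeometry.angle_eq_abs_oangle_toReal h2 h3,
    ← EuclideanGeometry.oangle_add h1 h2 h3]
  exact abs_toReal_add_le' _ _

/-- If `a, b, c` lie on a circle of radius `R` centered at `o` and the arcs from
`a` to `c` and from `c` to `b` each have length greater than `d > 0` (the arc from
`x` to `y` having length `R · ∠ x o y`), then the inscribed angle satisfies
`∠ a c b < π − d / R`. -/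
theorem inscribed_angle_lt_of_long_arcs
    (a b c o : EuclideanSpace ℝ (Fin 2)) (R d : ℝ) (hd : 0 < d)
    (ha : dist a o = R) (hb : dist b o = R) (hc : dist c o = R)
    (harc₁ : d < R * EuclideanGeometry.angle a o c)
    (harc₂ : d < R * EuclideanGeometry.angle c o b) :
    EuclideanGeometry.angle a c b < π - d / R := by
  have hnn1 := EuclideanGeometry.angle_nonneg a o c
  have hnn2 := EuclideanGeometry.angle_nonneg c o b
  have hle1 := EuclideanGeometry.angle_le_pi a o c
  have hle2 := EuclideanGeometry.angle_le_pi c o b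
  have hR : 0 < R := by nlinarith
  have hao : a ≠ o := by intro h; rw [h, dist_self] at ha; linarith
  have hbo : b ≠ o := by intro h; rw [h, dist_self] at hb; linarith
  have hco : c ≠ o := by intro h; rw [h, dist_self] at hc; linarith
  have hac : a ≠ c := by
    intro h
    rw [h, EuclideanGeometry.angle_self_of_ne hco] at harc₁
    nlinarith
  have hcb : c ≠ b := by
    intro h
    rw [h, EuclideanGeometry.angle_self_of_ne hbo] at harc₂
    nlinarith
  -- isoceles triangles
  have hiso1 : EuclideanGeometry.angle o a c = EuclideanGeometry.angle o c a :=
    EuclideanGeometry.angle_eq_angle_of_dist_eq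
      (by rw [dist_comm o a, dist_comm o c, ha, hc])
  have hiso2 : EuclideanGeometry.angle o c b = EuclideanGeometry.angle o b c :=
    EuclideanGeometry.angle_eq_angle_of_dist_eq
      (by rw [dist_comm o c, dist_comm o b, hc, hb])
  -- triangle angle sums
  have hsum1 : EuclideanGeometry.angle a o c + EuclideanGeometry.angle o c a +
      EuclideanGeometry.angle c a o = π :=
    EuclideanGeometry.angle_add_angle_add_angle_eq_pi c (Ne.symm hao)
  have hsum2 : EuclideanGeometry.angle b o c + EuclideanGeometry.angle o c b +
      EuclideanGeometry.angle c b o = π :=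
    EuclideanGeometry.angle_add_angle_add_angle_eq_pi c (Ne.symm hbo)
  have hca : EuclideanGeometry.angle c a o = EuclideanGeometry.angle o a c :=
    EuclideanGeometry.angle_comm _ _ _
  have hcb' : EuclideanGeometry.angle c b o = EuclideanGeometry.angle o b c :=
    EuclideanGeometry.angle_comm _ _ _
  have hboc : EuclideanGeometry.angle b o c = EuclideanGeometry.angle c o b :=
    EuclideanGeometry.angle_comm _ _ _
  -- triangle inequality for angles at c
  have htri : EuclideanGeometry.angle a c b ≤
      EuclideanGeometry.angle a c o + EuclideanGeometry.angle o c b :=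
    angle_le_angle_add_angle' c a o b hac (Ne.symm hco) (Ne.symm hcb)
  have haco : EuclideanGeometry.angle a c o = EuclideanGeometry.angle o c a :=
    EuclideanGeometry.angle_comm _ _ _
  have hdR1 : d / R < EuclideanGeometry.angle a o c := (div_lt_iff₀ hR).2 (by linarith [harc₁]; )
  have hdR2 : d / R < EuclideanGeometry.angle c o b := (div_lt_iff₀ hR).2 (by linarith [harc₂])
  linarith
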